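/- Fix λ > 0, α > 2, θ > 0, p_t > 0, σ² ≥ 0 and γ ∈ (0,1). Define G(r) = 2πλ r^{2−α}/(α−2) and s(r) = (θ/p_t)(p_t G(r) + σ²) for r > 0, and let μ₁ be the measure on {(r₀,r₁) ∈ ℝ² : 0 < r₀ < r₁} with density (2πλ)² r₀ r₁ exp(−πλ r₁²) with respect to Lebesgue measure. For r > 0, let K₁(r) = x(r)^{1/α}, where x(r) is the unique positive real with exp(−s(r) x) = γ (1 + θ r^{−α} x). Then μ₁ of the event {(r₀,r₁) : exp(−s(r₁) r₀^α) > γ (1 + θ r₀^α r₁^{−α})} equals ∫₀^∞ min(1, K₁(r)²/r²) · 2(πλ)² r³ exp(−πλ r²) dr. -/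

import Mathlib

open MeasureTheory Real Set ENNReal

private lemma key_iff {c₁ c₂ g xr : ℝ} (hc₁ : 0 < c₁) (hc₂ : 0 < c₂) (hg : 0 < g)
    (hxr : Real.exp (-(c₁ * xr)) = g * (1 + c₂ * xr)) (t : ℝ) :
    g * (1 + c₂ * t) < Real.exp (-(c₁ * t)) ↔ t < xr := by
  have hanti : StrictAnti (fun u => Real.exp (-(c₁ * u)) - g * (1 + c₂ * u)) := by
    intro a b hab
    have h1 : Real.exp (-(c₁ * b)) < Real.exp (-(c₁ * a)) :=
      Real.exp_lt_exp.2 (by nlinarith)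
    have h2 : g * (1 + c₂ * a) < g * (1 + c₂ * b) := by nlinarith [mul_pos hg (mul_pos hc₂ (sub_pos.2 hab))]
    simp only
    linarith
  have h0 : Real.exp (-(c₁ * xr)) - g * (1 + c₂ * xr) = 0 := by rw [hxr]; ring
  have hiff : Real.exp (-(c₁ * xr)) - g * (1 + c₂ * xr) <
      Real.exp (-(c₁ * t)) - g * (1 + c₂ * t) ↔ t < xr := hanti.lt_iff_gt
  rw [h0] at hiff
  rw [← hiff]
  constructor <;> intro h <;> linarith

/-- Corollary 1 of the paper (dominant interferer-based approximation of the SINR meta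
distribution) as an exact measure identity.  `μ₁` is the joint law of `(R₀, R₁)` (density
`(2πλ)² r₀ r₁ e^{−πλ r₁²}` on `{0 < r₀ < r₁}`), `s r = (θ/p_t)(p_t G r + σ²)` with
`G r = 2πλ r^{2−α}/(α−2)`, and for `r > 0`, `x r` is the unique positive solution of
`exp(−s(r)x) = γ(1 + θ r^{−α} x)`, so that `K₁ r = (x r)^{1/α}`.  The `μ₁`-measure of the
success event equals `∫₀^∞ min(1, K₁(r)²/r²) · 2(πλ)² r³ e^{−πλ r²} dr`. -/
theorem stmt7 (lam α θ pt σ2 γ : ℝ)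
    (hlam : 0 < lam) (hα : 2 < α) (hθ : 0 < θ) (hpt : 0 < pt) (hσ : 0 ≤ σ2)
    (hγ0 : 0 < γ) (hγ1 : γ < 1)
    (G s : ℝ → ℝ)
    (hG : ∀ r, G r = 2 * π * lam * r ^ (2 - α) / (α - 2))
    (hs : ∀ r, s r = θ / pt * (pt * G r + σ2))
    (x : ℝ → ℝ)
    (hx : ∀ r, 0 < r → 0 < x r ∧
      Real.exp (-(s r * x r)) = γ * (1 + θ * r ^ (-α) * x r)) :
    (Measure.withDensity
        ((volume : Measure (ℝ × ℝ)).restrict {p : ℝ × ℝ | 0 < p.1 ∧ p.1 < p.2})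
        fun p => ENNReal.ofReal
          ((2 * π * lam) ^ 2 * p.1 * p.2 * Real.exp (-(π * lam * p.2 ^ 2))))
      {p : ℝ × ℝ |
        γ * (1 + θ * p.1 ^ α * p.2 ^ (-α)) < Real.exp (-(s p.2 * p.1 ^ α))}
      = ∫⁻ r in Set.Ioi (0 : ℝ),
          ENNReal.ofReal
            (min 1 ((x r ^ (1 / α)) ^ 2 / r ^ 2) *
              (2 * (π * lam) ^ 2 * r ^ 3 * Real.exp (-(π * lam * r ^ 2)))) := by
  have hα0 : (0:ℝ) < α := by linarith
  have hαne : α ≠ 0 := ne_of_gt hα0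
  set S : Set (ℝ × ℝ) := {p : ℝ × ℝ | 0 < p.1 ∧ p.1 < p.2} with hSdef
  set f : ℝ × ℝ → ℝ≥0∞ := fun p => ENNReal.ofReal
      ((2 * π * lam) ^ 2 * p.1 * p.2 * Real.exp (-(π * lam * p.2 ^ 2))) with hfdef
  have hsr : ∀ r : ℝ, s r =
      θ / pt * (pt * (2 * π * lam * r ^ (2 - α) / (α - 2)) + σ2) := by
    intro r; rw [hs, hG]
  set A : Set (ℝ × ℝ) := {p : ℝ × ℝ |
      γ * (1 + θ * p.1 ^ α * p.2 ^ (-α)) <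
        Real.exp (-(θ / pt * (pt * (2 * π * lam * p.2 ^ (2 - α) / (α - 2)) + σ2)
          * p.1 ^ α))} with hAdef
  have hset : {p : ℝ × ℝ |
      γ * (1 + θ * p.1 ^ α * p.2 ^ (-α)) < Real.exp (-(s p.2 * p.1 ^ α))} = A := by
    ext p
    simp only [hAdef, Set.mem_setOf_eq, hsr]
  have hmA : MeasurableSet A := by
    apply measurableSet_lt
    · fun_prop
    · fun_prop
  have hmS : MeasurableSet S := by
    have : S = {p : ℝ × ℝ | 0 < p.1} ∩ {p : ℝ × ℝ | p.1 < p.2} := rfl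
    rw [this]
    exact (measurableSet_lt measurable_const measurable_fst).inter
      (measurableSet_lt measurable_fst measurable_snd)
  have hmf : Measurable f := by fun_prop
  rw [hset, withDensity_apply _ hmA]
  rw [show ∫⁻ p in A, f p ∂(volume.restrict S)
      = ∫⁻ p, f p ∂((volume.restrict S).restrict A) from rfl]
  rw [Measure.restrict_restrict hmA]
  rw [← lintegral_indicator (hmA.inter hmS) f]
  rw [Measure.volume_eq_prod, MeasureTheory.lintegral_prod_symm _
    ((hmf.indicator (hmA.inter hmS)).aemeasurable)]
  have hpoint : ∀ r : ℝ, (∫⁻ r₀, ((A ∩ S).indicator f) (r₀, r)) =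
      (Ioi (0:ℝ)).indicator (fun r => ENNReal.ofReal
        (min 1 ((x r ^ (1 / α)) ^ 2 / r ^ 2) *
          (2 * (π * lam) ^ 2 * r ^ 3 * Real.exp (-(π * lam * r ^ 2))))) r := by
    intro r
    rcases le_or_gt r 0 with hr | hr
    · have hz : ∀ r₀ : ℝ, ((A ∩ S).indicator f) (r₀, r) = 0 := by
        intro r₀
        apply Set.indicator_of_notMem
        rintro ⟨-, h0, h1⟩
        exact absurd (h0.trans h1) (not_lt.2 hr)
      have hnotmem : r ∉ Ioi (0:ℝ) := by simpa using hr
      simp [hz, Set.indicator_of_notMem hnotmem]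
    · obtain ⟨hx1, hx2⟩ := hx r hr
      have hrα : (0:ℝ) < r ^ (-α) := Real.rpow_pos_of_pos hr _
      have hsrpos : 0 < s r := by
        rw [hsr]
        have h1 : 0 < r ^ (2 - α) := Real.rpow_pos_of_pos hr _
        have h2 : 0 < 2 * π * lam * r ^ (2 - α) / (α - 2) :=
          div_pos (by positivity) (by linarith)
        have h3 : 0 < pt * (2 * π * lam * r ^ (2 - α) / (α - 2)) + σ2 := by
          nlinarith
        exact mul_pos (div_pos hθ hpt) h3
      set K : ℝ := x r ^ (1 / α) with hKdef
      have hK0 : 0 < K := Real.rpow_pos_of_pos hx1 _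
      have hKα : K ^ α = x r := by
        rw [hKdef, ← Real.rpow_mul hx1.le, one_div, inv_mul_cancel₀ hαne, Real.rpow_one]
      set m : ℝ := min r K with hmdef
      have hm0 : 0 < m := lt_min hr hK0
      set C : ℝ := (2 * π * lam) ^ 2 * r * Real.exp (-(π * lam * r ^ 2)) with hCdef
      have hC0 : 0 < C := by positivity
      have hmem_iff : ∀ r₀ : ℝ, (r₀, r) ∈ A ∩ S ↔ r₀ ∈ Ioo 0 m := by
        intro r₀
        simp only [Set.mem_inter_iff, hAdef, hSdef, Set.mem_setOf_eq, Set.mem_Ioo]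
        constructor
        · rintro ⟨hineq, h0, h1⟩
          refine ⟨h0, lt_min h1 ?_⟩
          rw [← hsr r] at hineq
          have hcomm : θ * r₀ ^ α * r ^ (-α) = θ * r ^ (-α) * r₀ ^ α := by ring
          rw [hcomm] at hineq
          have hxα : r₀ ^ α < x r :=
            (key_iff hsrpos (by positivity) hγ0 hx2 (r₀ ^ α)).mp hineq
          have h4 : (r₀ ^ α) ^ (1 / α) < (x r) ^ (1 / α) :=
            Real.rpow_lt_rpow (Real.rpow_nonneg h0.le α) hxα (by positivity)
          rwa [← Real.rpow_mul h0.le, mul_one_div, div_self hαne, Real.rpow_one] at h4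
        · rintro ⟨h0, h1⟩
          have h1r : r₀ < r := lt_of_lt_of_le h1 (min_le_left _ _)
          have h1K : r₀ < K := lt_of_lt_of_le h1 (min_le_right _ _)
          refine ⟨?_, h0, h1r⟩
          have hxα : r₀ ^ α < x r := by
            have := Real.rpow_lt_rpow h0.le h1K hα0
            rwa [hKα] at this
          have hineq := (key_iff hsrpos (by positivity) hγ0 hx2 (r₀ ^ α)).mpr hxα
          rw [← hsr r]
          have hcomm : θ * r₀ ^ α * r ^ (-α) = θ * r ^ (-α) * r₀ ^ α := by ring
          rw [hcomm]
          exact hineq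
      have hslice : ∀ r₀ : ℝ, ((A ∩ S).indicator f) (r₀, r)
          = (Ioo (0:ℝ) m).indicator (fun t => ENNReal.ofReal (C * t)) r₀ := by
        intro r₀
        by_cases hmem : r₀ ∈ Ioo (0:ℝ) m
        · rw [Set.indicator_of_mem ((hmem_iff r₀).mpr hmem), Set.indicator_of_mem hmem]
          simp only [hfdef, hCdef]
          congr 1
          ring
        · rw [Set.indicator_of_notMem (fun h => hmem ((hmem_iff r₀).mp h)),
            Set.indicator_of_notMem hmem]
      rw [lintegral_congr hslice, lintegral_indicator measurableSet_Ioo]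
      have hInt : IntegrableOn (fun t : ℝ => C * t) (Ioo 0 m) := by
        have : Continuous (fun t : ℝ => C * t) := continuous_const.mul continuous_id
        exact (this.integrableOn_Icc).mono_set Set.Ioo_subset_Icc_self
      have hnn : 0 ≤ᵐ[volume.restrict (Ioo (0:ℝ) m)] fun t : ℝ => C * t := by
        filter_upwards [ae_restrict_mem measurableSet_Ioo] with t ht
        exact mul_nonneg hC0.le ht.1.le
      rw [← ofReal_integral_eq_lintegral_ofReal hInt hnn]
      have hval : ∫ t in Ioo (0:ℝ) m, C * t = C * (m ^ 2 / 2) := by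
        rw [← integral_Ioc_eq_integral_Ioo, ← intervalIntegral.integral_of_le hm0.le,
          intervalIntegral.integral_const_mul, integral_id]
        ring
      rw [hval, Set.indicator_of_mem (Set.mem_Ioi.mpr hr)]
      congr 1
      have hr2 : (0:ℝ) < r ^ 2 := by positivity
      rcases le_total r K with h | h
      · have hmr : m = r := min_eq_left h
        have hK2 : r ^ 2 ≤ K ^ 2 := by nlinarith
        have hmin : min 1 (K ^ 2 / r ^ 2) = 1 :=
          min_eq_left ((one_le_div hr2).2 hK2)
        rw [hmr, hmin, hCdef]
        ring
      · have hmr : m = K := min_eq_right h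
        have hK2 : K ^ 2 ≤ r ^ 2 := by nlinarith
        have hmin : min 1 (K ^ 2 / r ^ 2) = K ^ 2 / r ^ 2 :=
          min_eq_right ((div_le_one hr2).2 hK2)
        rw [hmr, hmin, hCdef]
        field_simp
  rw [lintegral_congr hpoint, lintegral_indicator measurableSet_Ioi]
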